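/- If both the north pole and south pole lie on the boundary of a spherical cap C(w,t) with w = γ(φ_w, θ_w) and t ∈ [0,1), then t = 0, θ_w = π/2, and ∂C = γ({φ_w + π/2, φ_w + 3π/2} × [0,π]), i.e. the boundary is the union of the two meridians at angles φ_w ± π/2. -/

import Mathlib

open Real Set
open scoped RealInnerProductSpace

noncomputable section

/-- The unit sphere in ℝ³. -/
def S2 : Set (EuclideanSpace ℝ (Fin 3)) := Metric.sphere 0 1

/-- The standard spherical parametrization `γ(φ, θ)`. -/
def gammaMap (φ θ : ℝ) : EuclideanSpace ℝ (Fin 3) :=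
  (WithLp.equiv 2 (Fin 3 → ℝ)).symm
    ![Real.cos φ * Real.sin θ, Real.sin φ * Real.sin θ, Real.cos θ]

/-- The boundary circle of the spherical cap `C(w, t)`. -/
def capBoundary (w : EuclideanSpace ℝ (Fin 3)) (t : ℝ) :
    Set (EuclideanSpace ℝ (Fin 3)) :=
  {x ∈ S2 | ⟪x, w⟫ = t}

lemma inner_gamma (x : EuclideanSpace ℝ (Fin 3)) (φ θ : ℝ) :
    ⟪x, gammaMap φ θ⟫ = x 0 * (Real.cos φ * Real.sin θ) + x 1 * (Real.sin φ * Real.sin θ)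
      + x 2 * Real.cos θ := by
  simp [gammaMap, PiLp.inner_apply, Fin.sum_univ_three]; ring

lemma gamma_mem_S2 (φ θ : ℝ) : gammaMap φ θ ∈ S2 := by
  have : ‖gammaMap φ θ‖ = 1 := by
    rw [show (1:ℝ) = Real.sqrt 1 by simp, EuclideanSpace.norm_eq]
    congr 1
    simp [gammaMap, Fin.sum_univ_three]
    nlinarith [sin_sq_add_cos_sq θ, sin_sq_add_cos_sq φ]
  simpa [S2] using this

lemma sum_sq_of_mem_S2 {x : EuclideanSpace ℝ (Fin 3)} (hx : x ∈ S2) :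
    x 0 ^ 2 + x 1 ^ 2 + x 2 ^ 2 = 1 := by
  have h : ‖x‖ = 1 := by simpa [S2] using hx
  have h2 : ⟪x, x⟫ = 1 := by rw [real_inner_self_eq_norm_mul_norm, h]; ring
  rw [PiLp.inner_apply, Fin.sum_univ_three] at h2
  simp at h2
  linear_combination h2

/-- If both poles lie on the boundary of the cap `C(γ(φ_w, θ_w), t)` with `t ∈ [0,1)`
and `θ_w ∈ (0, π)`, then `t = 0`, `θ_w = π/2`, and the boundary is the union of the two
meridians at angles `φ_w + π/2` and `φ_w + 3π/2`. -/
theorem both_poles_on_boundary (φw θw t : ℝ)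
    (ht : t ∈ Ico (0 : ℝ) 1) (hθw : θw ∈ Ioo 0 π)
    (hnp : gammaMap 0 0 ∈ capBoundary (gammaMap φw θw) t)
    (hsp : gammaMap 0 π ∈ capBoundary (gammaMap φw θw) t) :
    t = 0 ∧ θw = π / 2 ∧
      capBoundary (gammaMap φw θw) t =
        {x | ∃ θ ∈ Icc (0 : ℝ) π,
          x = gammaMap (φw + π / 2) θ ∨ x = gammaMap (φw + 3 * π / 2) θ} := by
  have h1 : Real.cos θw = t := by
    have := hnp.2
    rw [inner_gamma] at this
    simpa [gammaMap] using this
  have h2 : -Real.cos θw = t := by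
    have := hsp.2
    rw [inner_gamma] at this
    simp [gammaMap] at this
    linarith [this]
  have ht0 : t = 0 := by linarith
  have hc : Real.cos θw = 0 := by linarith
  have hθ : θw = π / 2 := by
    refine Real.injOn_cos ⟨le_of_lt hθw.1, le_of_lt hθw.2⟩
      ⟨by positivity, by linarith [pi_pos]⟩ ?_
    rw [hc, Real.cos_pi_div_two]
  subst ht0 hθ
  have c32 : Real.cos (π * (3/2)) = 0 := by
    rw [show π * (3/2) = π + π/2 by ring, Real.cos_add]; simp
  have s32 : Real.sin (π * (3/2)) = -1 := by
    rw [show π * (3/2) = π + π/2 by ring, Real.sin_add]; simp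
  have c32' : Real.cos (3 * π / 2) = 0 := by rw [show 3*π/2 = π*(3/2) by ring]; exact c32
  have s32' : Real.sin (3 * π / 2) = -1 := by rw [show 3*π/2 = π*(3/2) by ring]; exact s32
  refine ⟨rfl, rfl, ?_⟩
  ext x
  constructor
  · rintro ⟨hxS, hxi⟩
    rw [inner_gamma] at hxi
    simp at hxi
    obtain ⟨s, hs⟩ : ∃ s, s = x 1 * Real.cos φw - x 0 * Real.sin φw := ⟨_, rfl⟩
    have hsum := sum_sq_of_mem_S2 hxS
    have pyth := sin_sq_add_cos_sq φw
    have hperp : x 0 * Real.cos φw + x 1 * Real.sin φw = 0 := by linarith [hxi]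
    have hx0 : x 0 = -s * Real.sin φw := by
      rw [hs]; linear_combination Real.cos φw * hperp - x 0 * pyth
    have hx1 : x 1 = s * Real.cos φw := by
      rw [hs]; linear_combination Real.sin φw * hperp - x 1 * pyth
    have hssq : s ^ 2 = 1 - x 2 ^ 2 := by
      rw [hs]
      linear_combination hsum - (x 0 * Real.cos φw + x 1 * Real.sin φw) * hperp
        + (x 0 ^ 2 + x 1 ^ 2) * pyth
    have hx2a : -1 ≤ x 2 := by nlinarith [sq_nonneg s]
    have hx2b : x 2 ≤ 1 := by nlinarith [sq_nonneg s]
    refine ⟨Real.arccos (x 2), ⟨Real.arccos_nonneg _, Real.arccos_le_pi _⟩, ?_⟩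
    have hsin : Real.sin (Real.arccos (x 2)) = Real.sqrt (1 - x 2 ^ 2) :=
      Real.sin_arccos _
    have hcos : Real.cos (Real.arccos (x 2)) = x 2 := Real.cos_arccos hx2a hx2b
    rcases le_or_gt 0 s with hsle | hslt
    · left
      have hsv : Real.sin (Real.arccos (x 2)) = s := by
        rw [hsin, ← hssq, Real.sqrt_sq hsle]
      ext i
      fin_cases i <;>
        simp [gammaMap, Real.cos_add, Real.sin_add, hsv, hcos, hx0, hx1, c32, s32, c32', s32'] <;> ring
    · right
      have hsv : Real.sin (Real.arccos (x 2)) = -s := by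
        rw [hsin, ← hssq, show s^2 = (-s)^2 by ring, Real.sqrt_sq (by linarith)]
      ext i
      fin_cases i <;>
        simp [gammaMap, Real.cos_add, Real.sin_add, hsv, hcos, hx0, hx1, c32, s32, c32', s32'] <;> ring
  · rintro ⟨θ, hθ, h | h⟩ <;> subst h <;>
      refine ⟨gamma_mem_S2 _ _, ?_⟩ <;>
      · rw [inner_gamma]
        simp [gammaMap, Real.cos_add, Real.sin_add, c32, s32, c32', s32']
        ring
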